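/- Let Q_X be a real T×(K₁⊕T₂) orthogonal matrix (Q_Xᵀ Q_X = 1 and Q_X Q_Xᵀ = 1), Q̃ an isometric T₂×K₂ matrix, and Q := Q_X * fromBlocks 1 0 0 Q̃. Let V be a real T×S matrix and write Q_Xᵀ * V = fromRows M₁ M₂ with M₁ a K₁×S matrix and M₂ a T₂×S matrix. Then Q * Qᵀ * V = Q_X * fromRows M₁ (Q̃ * Q̃ᵀ * M₂), and consequently ‖V − Q * Qᵀ * V‖₂ = ‖M₂ − Q̃ * Q̃ᵀ * M₂‖₂. -/

import Mathlib

open Matrix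
open scoped Matrix.Norms.L2Operator

private lemma norm_eq_of_sq {m n m' n' : Type*} [Fintype m] [Fintype n] [Fintype m'] [Fintype n']
    [DecidableEq n] [DecidableEq n']
    (A : Matrix m n ℝ) (B : Matrix m' n' ℝ) (h : ‖Aᴴ * A‖ = ‖Bᴴ * B‖) : ‖A‖ = ‖B‖ := by
  have h1 := Matrix.l2_opNorm_conjTranspose_mul_self A
  have h2 := Matrix.l2_opNorm_conjTranspose_mul_self B
  rw [h, h2] at h1
  rcases mul_self_eq_mul_self_iff.mp h1 with h3 | h3
  · exact h3.symm
  · have := norm_nonneg A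
    have := norm_nonneg B
    linarith

/-- Structure of the leaf compression step: after transforming by the orthogonal
Householder factor `Q_X`, the top block is kept exactly and only the lower remainder
`M₂` is approximated, so the total compression error equals the error on the remainder. -/
theorem stmt_17 {T T₂ K₁ K₂ S : Type*}
    [Fintype T] [DecidableEq T] [Fintype T₂] [DecidableEq T₂]
    [Fintype K₁] [DecidableEq K₁] [Fintype K₂] [DecidableEq K₂]
    [Fintype S] [DecidableEq S]
    (Q_X : Matrix T (K₁ ⊕ T₂) ℝ)
    (hQX₁ : Q_Xᵀ * Q_X = 1) (hQX₂ : Q_X * Q_Xᵀ = 1)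
    (Qtilde : Matrix T₂ K₂ ℝ) (hQt : Qtildeᵀ * Qtilde = 1)
    (V : Matrix T S ℝ) (M₁ : Matrix K₁ S ℝ) (M₂ : Matrix T₂ S ℝ)
    (hM : Q_Xᵀ * V = fromRows M₁ M₂) :
    (Q_X * fromBlocks (1 : Matrix K₁ K₁ ℝ) 0 0 Qtilde) * (Q_X * fromBlocks (1 : Matrix K₁ K₁ ℝ) 0 0 Qtilde)ᵀ * V =
        Q_X * fromRows M₁ (Qtilde * Qtildeᵀ * M₂) ∧
      ‖V - (Q_X * fromBlocks (1 : Matrix K₁ K₁ ℝ) 0 0 Qtilde) * (Q_X * fromBlocks (1 : Matrix K₁ K₁ ℝ) 0 0 Qtilde)ᵀ * V‖ =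
        ‖M₂ - Qtilde * Qtildeᵀ * M₂‖ := by
  have key : (Q_X * fromBlocks (1 : Matrix K₁ K₁ ℝ) 0 0 Qtilde) *
      (Q_X * fromBlocks (1 : Matrix K₁ K₁ ℝ) 0 0 Qtilde)ᵀ * V =
      Q_X * fromRows M₁ (Qtilde * Qtildeᵀ * M₂) := by
    rw [transpose_mul, fromBlocks_transpose, transpose_one, transpose_zero, transpose_zero,
      Matrix.mul_assoc (Q_X * fromBlocks 1 0 0 Qtilde), Matrix.mul_assoc,
      Matrix.mul_assoc, hM, fromBlocks_mul_fromRows]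
    simp [fromBlocks_mul_fromRows, Matrix.mul_assoc]
  refine ⟨key, ?_⟩
  rw [key]
  have hV : V = Q_X * fromRows M₁ M₂ := by
    rw [← hM, ← Matrix.mul_assoc, hQX₂, Matrix.one_mul]
  have hdiff : V - Q_X * fromRows M₁ (Qtilde * Qtildeᵀ * M₂) =
      Q_X * fromRows (0 : Matrix K₁ S ℝ) (M₂ - Qtilde * Qtildeᵀ * M₂) := by
    rw [hV, ← Matrix.mul_sub]
    congr 1
    ext (i | i) j <;> simp
  rw [hdiff]
  apply norm_eq_of_sq
  apply congrArg
  set E := M₂ - Qtilde * Qtildeᵀ * M₂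
  simp only [conjTranspose_eq_transpose_of_trivial]
  rw [transpose_mul, transpose_fromRows, Matrix.mul_assoc,
    ← Matrix.mul_assoc Q_Xᵀ, hQX₁, Matrix.one_mul, fromCols_mul_fromRows]
  simp
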